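/- Let (Y, μ) be a measurable space with σ-finite measure μ, let h : Y → [0,∞) and T : Y → ℝ^d be measurable, and for η ∈ ℝ^d define the log-partition function A(η) = log ∫ h(y)·exp(ηᵀT(y)) dμ(y). Assume A is finite and twice continuously differentiable on ℝ^d with λ̲‖v‖₂² ≤ vᵀ∇²A(η)v ≤ λ̄‖v‖₂² for all η, v ∈ ℝ^d, where 0 < λ̲ ≤ λ̄. For η₁, η₂ ∈ ℝ^d let p_i(y) = h(y)·exp(η_iᵀT(y) − A(η_i)) be the corresponding exponential-family densities. Then: 1 − exp( −(λ̲/8)‖η₁ − η₂‖₂² ) ≤ D_H²(p₁‖p₂) ≤ 1 − exp( −(λ̄/8)‖η₁ − η₂‖₂² ). -/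

import Mathlib

open MeasureTheory

section Helpers

lemma midpoint_lb {f : ℝ → ℝ} (hf : Differentiable ℝ f) (hf' : Differentiable ℝ (deriv f))
    {c : ℝ} (hc : ∀ t, 2 * c ≤ deriv (deriv f) t) :
    f 0 + c ≤ (f 1 + f (-1)) / 2 := by
  set F : ℝ → ℝ := fun t => f t - c * t ^ 2 with hF
  have hF1 : Differentiable ℝ F := hf.sub (by fun_prop)
  have hdF : deriv F = fun t => deriv f t - 2 * c * t := by
    funext t
    have lem : HasDerivAt F (deriv f t - 2 * c * t) t := by
      have h1 : HasDerivAt f (deriv f t) t := (hf t).hasDerivAt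
      have h2 : HasDerivAt (fun t : ℝ => c * t ^ 2) (c * (2 * t)) t := by
        simpa using ((hasDerivAt_pow 2 t).const_mul c)
      exact (h1.sub h2).congr_deriv (by ring)
    exact lem.deriv
  have hF2 : Differentiable ℝ (deriv F) := by
    rw [hdF]; exact hf'.sub (by fun_prop)
  have hconv : ConvexOn ℝ Set.univ F := by
    apply convexOn_univ_of_deriv2_nonneg hF1 hF2
    intro t
    have lem : deriv (deriv F) t = deriv (deriv f) t - 2 * c := by
      rw [hdF]
      have h1 : HasDerivAt (deriv f) (deriv (deriv f) t) t := (hf' t).hasDerivAt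
      have h2 : HasDerivAt (fun t : ℝ => 2 * c * t) (2 * c) t := by
        simpa using (hasDerivAt_id t).const_mul (2 * c)
      exact (h1.sub h2).deriv
    simp only [Function.iterate_succ, Function.iterate_zero, Function.comp_apply, id]
    rw [lem]
    linarith [hc t]
  have := hconv.2 (Set.mem_univ (1 : ℝ)) (Set.mem_univ (-1 : ℝ))
    (by norm_num : (0:ℝ) ≤ (1/2:ℝ)) (by norm_num : (0:ℝ) ≤ (1/2:ℝ)) (by norm_num)
  norm_num [hF] at this
  linarith

lemma midpoint_ub {f : ℝ → ℝ} (hf : Differentiable ℝ f) (hf' : Differentiable ℝ (deriv f))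
    {c : ℝ} (hc : ∀ t, deriv (deriv f) t ≤ 2 * c) :
    (f 1 + f (-1)) / 2 ≤ f 0 + c := by
  have hneg : Differentiable ℝ (fun t => -f t) := hf.neg
  have hdneg : deriv (fun t => -f t) = fun t => -deriv f t := by
    funext t; simp
  have hneg' : Differentiable ℝ (deriv (fun t => -f t)) := by
    rw [hdneg]; exact hf'.neg
  have hc' : ∀ t, 2 * (-c) ≤ deriv (deriv (fun t => -f t)) t := by
    intro t
    have : deriv (deriv (fun t => -f t)) t = -deriv (deriv f) t := by
      rw [hdneg]
      simp
    rw [this]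
    linarith [hc t]
  have := midpoint_lb hneg hneg' hc'
  linarith

lemma line_deriv2 {E : Type*} [NormedAddCommGroup E] [NormedSpace ℝ E]
    (A : E → ℝ) (hAsmooth : ContDiff ℝ 2 A) (m w : E) :
    (Differentiable ℝ (fun t : ℝ => A (m + t • w))) ∧
    (Differentiable ℝ (deriv (fun t : ℝ => A (m + t • w)))) ∧
    (∀ t : ℝ, deriv (deriv (fun t : ℝ => A (m + t • w))) t
      = iteratedFDeriv ℝ 2 A (m + t • w) ![w, w]) := by
  have hA1 : Differentiable ℝ A := hAsmooth.differentiable (by norm_num)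
  have hA' : ContDiff ℝ 1 (fderiv ℝ A) := hAsmooth.fderiv_right (le_refl 2)
  have hγ : ∀ t : ℝ, HasDerivAt (fun t : ℝ => m + t • w) w t := fun t => by
    simpa using ((hasDerivAt_id t).smul_const w).const_add m
  have hf' : ∀ t : ℝ, HasDerivAt (fun t : ℝ => A (m + t • w))
      (fderiv ℝ A (m + t • w) w) t := fun t =>
    (hA1 (m + t • w)).hasFDerivAt.comp_hasDerivAt t (hγ t)
  have hdf : deriv (fun t : ℝ => A (m + t • w)) = fun t => fderiv ℝ A (m + t • w) w := by
    funext t; exact (hf' t).deriv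
  have hg : ∀ t : ℝ, HasDerivAt (fun t : ℝ => fderiv ℝ A (m + t • w) w)
      (fderiv ℝ (fderiv ℝ A) (m + t • w) w w) t := by
    intro t
    have inner : HasDerivAt (fun t : ℝ => fderiv ℝ A (m + t • w))
        (fderiv ℝ (fderiv ℝ A) (m + t • w) w) t :=
      ((hA'.differentiable (by norm_num)) (m + t • w)).hasFDerivAt.comp_hasDerivAt t (hγ t)
    exact inner.clm_apply (hasDerivAt_const t w) |>.congr_deriv (by simp)
  refine ⟨fun t => (hf' t).differentiableAt, ?_, ?_⟩
  · rw [hdf]; exact fun t => (hg t).differentiableAt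
  · intro t
    rw [hdf, (hg t).deriv, iteratedFDeriv_two_apply]
    simp

end Helpers

/-- Let `(Y, μ)` be a σ-finite measure space, `h : Y → [0,∞)` and
`T : Y → ℝ^d` measurable, and let `A(η) = log ∫ h(y)·exp(ηᵀT(y)) dμ(y)` be the log-partition
function, assumed finite (integrable defining integrand with positive integral) and twice
continuously differentiable with `λ̲‖v‖² ≤ vᵀ∇²A(η)v ≤ λ̄‖v‖²` for all `η, v`, where
`0 < λ̲ ≤ λ̄`. Then the exponential-family densities `pᵢ(y) = h(y)·exp(ηᵢᵀT(y) − A(ηᵢ))`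
satisfy `1 − exp(−(λ̲/8)‖η₁ − η₂‖²) ≤ D_H²(p₁‖p₂) ≤ 1 − exp(−(λ̄/8)‖η₁ − η₂‖²)`,
where `D_H²(p‖q) = 1 − ∫ √(p q) dμ`. -/
theorem stmt15 {Y : Type*} [MeasurableSpace Y] (μ : Measure Y) [SigmaFinite μ]
    (d : ℕ) (h : Y → ℝ) (hh : ∀ y, 0 ≤ h y) (hhmeas : Measurable h)
    (T : Y → EuclideanSpace ℝ (Fin d)) (hTmeas : Measurable T)
    (A : EuclideanSpace ℝ (Fin d) → ℝ)
    (hA : ∀ η, A η = Real.log (∫ y, h y * Real.exp (∑ i, η i * T y i) ∂μ))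
    (hfin : ∀ η : EuclideanSpace ℝ (Fin d),
      Integrable (fun y => h y * Real.exp (∑ i, η i * T y i)) μ ∧
        0 < ∫ y, h y * Real.exp (∑ i, η i * T y i) ∂μ)
    (hAsmooth : ContDiff ℝ 2 A)
    (lam lam' : ℝ) (hlam : 0 < lam) (hle : lam ≤ lam')
    (hHess : ∀ η v : EuclideanSpace ℝ (Fin d),
      lam * ‖v‖ ^ 2 ≤ iteratedFDeriv ℝ 2 A η ![v, v] ∧
        iteratedFDeriv ℝ 2 A η ![v, v] ≤ lam' * ‖v‖ ^ 2)
    (η₁ η₂ : EuclideanSpace ℝ (Fin d))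
    (p₁ p₂ : Y → ℝ)
    (hp₁ : ∀ y, p₁ y = h y * Real.exp ((∑ i, η₁ i * T y i) - A η₁))
    (hp₂ : ∀ y, p₂ y = h y * Real.exp ((∑ i, η₂ i * T y i) - A η₂)) :
    1 - Real.exp (-(lam / 8) * ‖η₁ - η₂‖ ^ 2) ≤
        1 - ∫ y, Real.sqrt (p₁ y * p₂ y) ∂μ ∧
      1 - ∫ y, Real.sqrt (p₁ y * p₂ y) ∂μ ≤
        1 - Real.exp (-(lam' / 8) * ‖η₁ - η₂‖ ^ 2) := by
  -- midpoint and half-difference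
  set m : EuclideanSpace ℝ (Fin d) := (2:ℝ)⁻¹ • (η₁ + η₂) with hm
  set w : EuclideanSpace ℝ (Fin d) := (2:ℝ)⁻¹ • (η₁ - η₂) with hw
  set C : ℝ := (A η₁ + A η₂) / 2 with hC
  -- algebra of the line
  have hm1 : m + (1:ℝ) • w = η₁ := by rw [hm, hw]; module
  have hm2 : m + (-1:ℝ) • w = η₂ := by rw [hm, hw]; module
  have hwnorm : ‖w‖ ^ 2 = ‖η₁ - η₂‖ ^ 2 / 4 := by
    rw [hw, norm_smul]
    simp [norm_inv]
    ring
  -- coordinate sums at the midpoint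
  have hs : ∀ y, (∑ i, m i * T y i)
      = ((∑ i, η₁ i * T y i) + (∑ i, η₂ i * T y i)) / 2 := by
    intro y
    rw [← Finset.sum_add_distrib, Finset.sum_div]
    apply Finset.sum_congr rfl
    intro i _
    have : m i = (2:ℝ)⁻¹ * (η₁ i + η₂ i) := by rw [hm]; rfl
    rw [this]; ring
  -- the square-root integrand
  have key : ∀ y, Real.sqrt (p₁ y * p₂ y)
      = h y * Real.exp ((∑ i, m i * T y i) - C) := by
    intro y
    have hsum : ((∑ i, η₁ i * T y i) - A η₁) + ((∑ i, η₂ i * T y i) - A η₂)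
        = ((∑ i, m i * T y i) - C) + ((∑ i, m i * T y i) - C) := by
      rw [hs y, hC]; ring
    have h2 : p₁ y * p₂ y = (h y * Real.exp ((∑ i, m i * T y i) - C)) ^ 2 := by
      calc p₁ y * p₂ y
          = (h y * h y) * Real.exp
            (((∑ i, η₁ i * T y i) - A η₁) + ((∑ i, η₂ i * T y i) - A η₂)) := by
            rw [hp₁ y, hp₂ y, Real.exp_add]; ring
        _ = (h y * Real.exp ((∑ i, m i * T y i) - C)) ^ 2 := by
            rw [hsum, Real.exp_add]; ring
    rw [h2, Real.sqrt_sq (mul_nonneg (hh y) (Real.exp_pos _).le)]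
  -- the Hellinger affinity
  have hint : (∫ y, Real.sqrt (p₁ y * p₂ y) ∂μ) = Real.exp (A m - C) := by
    simp only [key]
    have : (fun y => h y * Real.exp ((∑ i, m i * T y i) - C))
        = fun y => (h y * Real.exp (∑ i, m i * T y i)) / Real.exp C := by
      funext y; rw [Real.exp_sub]; ring
    rw [this, integral_div, Real.exp_sub]
    congr 1
    rw [hA m, Real.exp_log (hfin m).2]
  -- convexity bounds along the segment
  obtain ⟨hf, hf', hd2⟩ := line_deriv2 A hAsmooth m w
  have hlb := midpoint_lb hf hf' (c := lam * ‖w‖ ^ 2 / 2) (fun t => by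
    rw [hd2 t]
    have := (hHess (m + t • w) w).1
    linarith)
  have hub := midpoint_ub hf hf' (c := lam' * ‖w‖ ^ 2 / 2) (fun t => by
    rw [hd2 t]
    have := (hHess (m + t • w) w).2
    linarith)
  rw [hm1, hm2] at hlb hub
  simp only [zero_smul, add_zero] at hlb hub
  have hAmC_ub : A m - C ≤ -(lam / 8) * ‖η₁ - η₂‖ ^ 2 := by
    rw [hC] at *
    nlinarith [hwnorm, hlb]
  have hAmC_lb : -(lam' / 8) * ‖η₁ - η₂‖ ^ 2 ≤ A m - C := by
    rw [hC] at *
    nlinarith [hwnorm, hub]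
  rw [hint]
  constructor
  · have := Real.exp_le_exp.mpr hAmC_ub
    linarith
  · have := Real.exp_le_exp.mpr hAmC_lb
    linarith
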